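/- Let n : ℕ, let w : Fin n → Fin n → ℝ be symmetric with w i j ≥ 0 for all i, j, and let τ ≥ 0. If u, u⁺ : Fin n → ℝ satisfy the implicit (backward) Euler step u⁺ i + τ * ∑_j w i j * (u⁺ i − u⁺ j) = u i for every i, and 0 ≤ u i ≤ 1 for every i, then 0 ≤ u⁺ i ≤ 1 for every i; i.e. the implicit Euler method with a nonnegatively weighted graph Laplacian preserves the bounds of the solution unconditionally in the time step. -/
import Mathlib


/-- The implicit (backward) Euler method with a nonnegatively weighted graph Laplacian
unconditionally preserves the bounds `0 ≤ u ≤ 1` of the solution. -/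
theorem implicit_euler_preserves_bounds
    (n : ℕ) (w : Fin n → Fin n → ℝ) (hsym : ∀ i j, w i j = w j i)
    (hw : ∀ i j, 0 ≤ w i j) (τ : ℝ) (hτ : 0 ≤ τ)
    (u up : Fin n → ℝ)
    (hstep : ∀ i, up i + τ * ∑ j, w i j * (up i - up j) = u i)
    (hbound : ∀ i, 0 ≤ u i ∧ u i ≤ 1) :
    ∀ i, 0 ≤ up i ∧ up i ≤ 1 := by
  intro i
  constructor
  · -- lower bound: take the argmin
    obtain ⟨m, -, hm⟩ := Finset.exists_min_image Finset.univ up ⟨i, Finset.mem_univ i⟩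
    have hsum : ∑ j, w m j * (up m - up j) ≤ 0 := by
      apply Finset.sum_nonpos
      intro j _
      exact mul_nonpos_of_nonneg_of_nonpos (hw m j)
        (sub_nonpos.mpr (hm j (Finset.mem_univ j)))
    have : u m ≤ up m := by
      rw [← hstep m]
      nlinarith [mul_nonpos_of_nonneg_of_nonpos hτ hsum]
    have := le_trans (hbound m).1 this
    exact le_trans this (hm i (Finset.mem_univ i))
  · obtain ⟨m, -, hm⟩ := Finset.exists_max_image Finset.univ up ⟨i, Finset.mem_univ i⟩
    have hsum : 0 ≤ ∑ j, w m j * (up m - up j) := by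
      apply Finset.sum_nonneg
      intro j _
      exact mul_nonneg (hw m j) (sub_nonneg.mpr (hm j (Finset.mem_univ j)))
    have : up m ≤ u m := by
      rw [← hstep m]
      nlinarith [mul_nonneg hτ hsum]
    exact le_trans (hm i (Finset.mem_univ i)) (le_trans this (hbound m).2)
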